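/- For every collective of type (1,1) (one compassless automaton and one pebble) on the square lattice of width 2 and every initial configuration, the movement of the collective is not directed: there exists an implementation of its behaviour that is not directed. -/

import Mathlib

/-- Vertices of the square lattice of width 2: `E = ℤ × {0,1}`. -/
abbrev V : Type := ℤ × Fin 2

/-- Two vertices are neighbours iff they agree in one coordinate and differ by
exactly 1 in the other.  (In the second coordinate, which lives in `{0,1}`,
"differ by exactly 1" is the same as being distinct.) -/
def nbr (u v : V) : Prop :=
  (u.2 = v.2 ∧ |u.1 - v.1| = 1) ∨ (u.1 = v.1 ∧ u.2 ≠ v.2)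

/-- The multiset of the three neighbours of a vertex. -/
def nbrs (v : V) : Multiset V :=
  {(v.1 - 1, v.2), (v.1 + 1, v.2), (v.1, v.2 + 1)}

/-- The set of members of the collective located at vertex `v`,
given the positions `p` of the `n` members. -/
def occ {n : ℕ} (p : Fin n → V) (v : V) : Finset (Fin n) :=
  Finset.univ.filter fun i => p i = v

/-- The compassless observation made from vertex `v`: the set of members at `v`,
together with the unordered multiset of the sets of members at the three
neighbouring vertices.  No directional information is carried. -/
def obs {n : ℕ} (p : Fin n → V) (v : V) :
    Finset (Fin n) × Multiset (Finset (Fin n)) :=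
  (occ p v, (nbrs v).map (occ p))

/-- A collective of type `(1, m)`: one finite automaton (member `0`) and `m`
pebbles (members `1, …, m`).  The automaton has a finite state set `Q`,
an initial state `q₀`, a transition function `φ` and an output function `ψ`
(`none` = stay, `some y` = move to a neighbouring vertex whose set of members is
exactly `y`; in particular `some ∅` = move to a free neighbouring vertex).
Each pebble has a single internal state, so it is described by its output
function `ρ` alone: on a given observation it either stays (`false`) or,
provided it is on the same vertex as the automaton and the automaton makes a
move, follows the automaton to its new vertex (`true`). -/
structure Collective (m : ℕ) where
  Q : Type
  finQ : Fintype Q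
  q₀ : Q
  φ : Q → Finset (Fin (m + 1)) × Multiset (Finset (Fin (m + 1))) → Q
  ψ : Q → Finset (Fin (m + 1)) × Multiset (Finset (Fin (m + 1))) →
        Option (Finset (Fin (m + 1)))
  ρ : Fin (m + 1) → Finset (Fin (m + 1)) × Multiset (Finset (Fin (m + 1))) → Bool

/-- One (nondeterministic) simultaneous step of the collective `A`, from
configuration `c` to configuration `c'`.  A configuration is an internal state
of the automaton together with the positions of all members. -/
def Step {m : ℕ} (A : Collective m)
    (c c' : A.Q × (Fin (m + 1) → V)) : Prop :=
  let p := c.2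
  let x := obs p (p 0)
  -- state update
  c'.1 = A.φ c.1 x ∧
  -- move of the automaton (member 0)
  ((A.ψ c.1 x = none ∧ c'.2 0 = p 0) ∨
    (∃ y, A.ψ c.1 x = some y ∧
      ((c'.2 0 ∈ nbrs (p 0) ∧ occ p (c'.2 0) = y) ∨
        (c'.2 0 = p 0 ∧ ∀ v ∈ nbrs (p 0), occ p v ≠ y)))) ∧
  -- moves of the pebbles: a pebble moves to the automaton's new vertex iff its
  -- output says so, it is on the automaton's (old) vertex, and the automaton
  (∀ i : Fin (m + 1), i ≠ 0 →
    ((A.ρ i (obs p (p i)) = true ∧ p i = p 0 ∧ c'.2 0 ≠ p 0) →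
        c'.2 i = c'.2 0) ∧
    (¬(A.ρ i (obs p (p i)) = true ∧ p i = p 0 ∧ c'.2 0 ≠ p 0) →
        c'.2 i = p i))

/-- An implementation of the behaviour of the collective `A` from the initial
positions `p₀` (and the initial internal state `A.q₀`): an infinite sequence of
configurations, each obtained from the previous one by one simultaneous step,
with all nondeterministic choices resolved arbitrarily. -/
def Implementation {m : ℕ} (A : Collective m) (p₀ : Fin (m + 1) → V)
    (c : ℕ → A.Q × (Fin (m + 1) → V)) : Prop :=
  c 0 = (A.q₀, p₀) ∧ ∀ t : ℕ, Step A (c t) (c (t + 1))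

/-- The coordinate of the collective: the average of the positions of its
members, as a point of `ℚ²`. -/
def coord {m : ℕ} (p : Fin (m + 1) → V) : ℚ × ℚ :=
  ((∑ i, ((p i).1 : ℚ)) / (m + 1), (∑ i, (((p i).2 : ℕ) : ℚ)) / (m + 1))

/-- The diameter of the collective: the maximum absolute difference of any
coordinate between positions of any two members. -/
def diam {m : ℕ} (p : Fin (m + 1) → V) : ℕ :=
  Finset.univ.sup fun ik : Fin (m + 1) × Fin (m + 1) =>
    max ((p ik.1).1 - (p ik.2).1).natAbs
      ((((p ik.1).2 : ℕ) : ℤ) - (((p ik.2).2 : ℕ) : ℤ)).natAbs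

/-- An implementation is directed if there are constants `c₁, c₂ ∈ ℕ` such that
the diameter is at most `c₁` at every time `t`, and for every `t` there exist
`1 ≤ t', t'' ≤ c₂` with `v(t+t') − v(t) = v(t+t'+t'') − v(t+t') ≠ (0,0)`. -/
def DirectedImpl {m : ℕ} (A : Collective m)
    (c : ℕ → A.Q × (Fin (m + 1) → V)) : Prop :=
  ∃ c₁ c₂ : ℕ, (∀ t : ℕ, diam (c t).2 ≤ c₁) ∧
    ∀ t : ℕ, ∃ t' t'' : ℕ, 1 ≤ t' ∧ t' ≤ c₂ ∧ 1 ≤ t'' ∧ t'' ≤ c₂ ∧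
      coord (c (t + t')).2 - coord (c t).2 =
        coord (c (t + t' + t'')).2 - coord (c (t + t')).2 ∧
      coord (c (t + t')).2 - coord (c t).2 ≠ (0, 0)


/-! ### Auxiliary development -/

section Aux

lemma row_ne_succ (r : Fin 2) : r + 1 ≠ r := by
  revert r; decide

lemma row_eq_of_ne {r₁ r₂ s : Fin 2} (h₁ : r₁ ≠ s) (h₂ : r₂ ≠ s) : r₁ = r₂ := by
  revert r₁ r₂ s; decide

lemma mem_nbrs {u v : V} :
    u ∈ nbrs v ↔ u = (v.1 - 1, v.2) ∨ u = (v.1 + 1, v.2) ∨ u = (v.1, v.2 + 1) := by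
  simp [nbrs]

lemma self_not_mem_nbrs (v : V) : v ∉ nbrs v := by
  rw [mem_nbrs]
  rintro (h | h | h) <;> rw [Prod.ext_iff] at h <;> obtain ⟨h1, h2⟩ := h
  · omega
  · omega
  · exact row_ne_succ v.2 h2.symm

lemma mem_occ {p : Fin 2 → V} {i : Fin 2} {v : V} : i ∈ occ p v ↔ p i = v := by
  simp [occ]

lemma occ_eq_empty {p : Fin 2 → V} {v : V} (h0 : p 0 ≠ v) (h1 : p 1 ≠ v) :
    occ p v = ∅ := by
  ext i
  fin_cases i <;> simp [mem_occ, h0, h1]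

/-- The fixed observation value seen when both members are at the same vertex. -/
def xT : Finset (Fin 2) × Multiset (Finset (Fin 2)) :=
  (Finset.univ, {∅, ∅, ∅})

lemma obs_blob {p : Fin 2 → V} (h : p 0 = p 1) : obs p (p 0) = xT := by
  have hocc : occ p (p 0) = Finset.univ := by
    ext i; fin_cases i <;> simp [mem_occ, h.symm]
  have hemp : ∀ v ∈ nbrs (p 0), occ p v = ∅ := by
    intro v hv
    have hv0 : p 0 ≠ v := fun e => self_not_mem_nbrs (p 0) (e ▸ hv)
    exact occ_eq_empty hv0 (h ▸ hv0)
  have h1 : occ p ((p 0).1 - 1, (p 0).2) = ∅ := hemp _ (by simp [mem_nbrs])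
  have h2 : occ p ((p 0).1 + 1, (p 0).2) = ∅ := hemp _ (by simp [mem_nbrs])
  have h3 : occ p ((p 0).1, (p 0).2 + 1) = ∅ := hemp _ (by simp [mem_nbrs])
  simp [obs, nbrs, xT, hocc, h1, h2, h3]

/-- Whether the pebble follows the automaton when they share a vertex. -/
def bfollow (A : Collective 1) : Bool := A.ρ 1 xT

/-- The adversary's choice of an empty neighbour to move to. -/
def etgt (A : Collective 1) (p : Fin 2 → V) : V :=
  if p 0 = p 1 then
    (if bfollow A then ((p 0).1, (p 0).2 + 1) else ((p 0).1 + 1, (p 0).2))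
  else if (0 ≤ (p 0).1 - (p 1).1 ∧ (p 0).1 - (p 1).1 ≤ 2) ∨ (p 0).1 - (p 1).1 ≤ -3 then
    ((p 0).1 + 1, (p 0).2)
  else ((p 0).1 - 1, (p 0).2)

lemma etgt_mem_nbrs (A : Collective 1) (p : Fin 2 → V) : etgt A p ∈ nbrs (p 0) := by
  rw [mem_nbrs]; unfold etgt; split_ifs <;> tauto

lemma etgt_ne_p0 (A : Collective 1) (p : Fin 2 → V) : etgt A p ≠ p 0 := by
  unfold etgt
  split_ifs with h1 h2 h3 <;> intro e <;> rw [Prod.ext_iff] at e <;>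
    obtain ⟨e1, e2⟩ := e
  · exact row_ne_succ (p 0).2 e2
  · omega
  · omega
  · omega

lemma etgt_ne_p1 (A : Collective 1) (p : Fin 2 → V) : etgt A p ≠ p 1 := by
  unfold etgt
  split_ifs with h1 h2 h3 <;> intro e
  · rw [← h1, Prod.ext_iff] at e
    exact row_ne_succ (p 0).2 e.2
  · rw [← h1, Prod.ext_iff] at e
    obtain ⟨e1, e2⟩ := e
    omega
  · rw [Prod.ext_iff] at e
    obtain ⟨e1, e2⟩ := e
    omega
  · rw [Prod.ext_iff] at e
    obtain ⟨e1, e2⟩ := e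
    omega

lemma y_tri (y : Finset (Fin 2)) : y = ∅ ∨ y = {1} ∨ (0 : Fin 2) ∈ y := by
  revert y; decide

/-- The adversary's deterministic move for the automaton. -/
def nextPos (A : Collective 1) (q : A.Q) (p : Fin 2 → V) : V :=
  if (A.ψ q (obs p (p 0))).getD {0} = ∅ then etgt A p
  else if (A.ψ q (obs p (p 0))).getD {0} = {1} ∧ p 1 ∈ nbrs (p 0) then p 1
  else p 0

/-- The adversary's deterministic simultaneous step. -/
def nextC (A : Collective 1) (z : A.Q × (Fin 2 → V)) : A.Q × (Fin 2 → V) :=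
  (A.φ z.1 (obs z.2 (z.2 0)),
    fun i => if i = 0 then nextPos A z.1 z.2
      else if A.ρ 1 (obs z.2 (z.2 1)) = true ∧ z.2 1 = z.2 0 ∧ nextPos A z.1 z.2 ≠ z.2 0
        then nextPos A z.1 z.2 else z.2 1)

lemma nextC_zero (A : Collective 1) (z : A.Q × (Fin 2 → V)) :
    (nextC A z).2 0 = nextPos A z.1 z.2 := by simp [nextC]

lemma nextC_one (A : Collective 1) (z : A.Q × (Fin 2 → V)) :
    (nextC A z).2 1 =
      if A.ρ 1 (obs z.2 (z.2 1)) = true ∧ z.2 1 = z.2 0 ∧ nextPos A z.1 z.2 ≠ z.2 0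
        then nextPos A z.1 z.2 else z.2 1 := by
  simp [nextC]

theorem step_next (A : Collective 1) (z : A.Q × (Fin 2 → V)) :
    Step A z (nextC A z) := by
  obtain ⟨q, p⟩ := z
  refine ⟨rfl, ?_, ?_⟩
  · -- move clause
    rcases hψ : A.ψ q (obs p (p 0)) with _ | y
    · left
      exact ⟨rfl, by simp [nextC_zero, nextPos, hψ]⟩
    · right
      refine ⟨y, rfl, ?_⟩
      rcases y_tri y with hy | hy | hy
      · subst hy
        left
        have hz : (nextC A (q, p)).2 0 = etgt A p := by
          simp [nextC_zero, nextPos, hψ]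
        rw [hz]
        exact ⟨etgt_mem_nbrs A p, occ_eq_empty (etgt_ne_p0 A p).symm
          (etgt_ne_p1 A p).symm⟩
      · subst hy
        by_cases hmem : p 1 ∈ nbrs (p 0)
        · left
          have hz : (nextC A (q, p)).2 0 = p 1 := by
            simp [nextC_zero, nextPos, hψ, hmem]
          rw [hz]
          refine ⟨hmem, ?_⟩
          ext i
          fin_cases i
          · simp [mem_occ]
            intro e
            exact absurd hmem (e ▸ self_not_mem_nbrs (p 0))
          · simp [mem_occ]
        · right
          have hz : (nextC A (q, p)).2 0 = p 0 := by
            simp [nextC_zero, nextPos, hψ, hmem]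
          refine ⟨hz, ?_⟩
          intro v hv hocc
          have hpv : p 1 = v := mem_occ.mp (hocc ▸ Finset.mem_singleton_self 1)
          rw [← hpv] at hv
          exact hmem hv
      · right
        have hyne : y ≠ ∅ := fun e => by simp [e] at hy
        have hyne1 : ¬(y = {1} ∧ p 1 ∈ nbrs (p 0)) := by
          rintro ⟨e, -⟩
          rw [e] at hy
          exact absurd hy (by decide)
        have hz : (nextC A (q, p)).2 0 = p 0 := by
          simp [nextC_zero, nextPos, hψ, hyne, hyne1]
        refine ⟨hz, ?_⟩
        intro v hv hocc
        have hpv : p 0 = v := mem_occ.mp (hocc ▸ hy)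
        rw [← hpv] at hv
        exact self_not_mem_nbrs (p 0) hv
  · -- pebble clause
    intro i hi
    have hi1 : i = 1 := by
      fin_cases i
      · exact absurd rfl hi
      · rfl
    subst hi1
    rw [nextC_one, nextC_zero]
    constructor
    · intro hcond
      rw [if_pos hcond]
    · intro hcond
      rw [if_neg hcond]

end Aux


/-! ### The adversarial run and its analysis -/

/-- The adversarial implementation. -/
def run (A : Collective 1) (p₀ : Fin 2 → V) : ℕ → A.Q × (Fin 2 → V)
  | 0 => (A.q₀, p₀)
  | t + 1 => nextC A (run A p₀ t)

lemma run_succ (A : Collective 1) (p₀ : Fin 2 → V) (t : ℕ) :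
    run A p₀ (t + 1) = nextC A (run A p₀ t) := rfl

lemma nextPos_cases (A : Collective 1) (q : A.Q) (p : Fin 2 → V) :
    nextPos A q p = p 0 ∨ nextPos A q p = etgt A p ∨
      (nextPos A q p = p 1 ∧ p 1 ∈ nbrs (p 0)) := by
  unfold nextPos
  split_ifs with hy hy1
  · right; left; rfl
  · right; right; exact ⟨rfl, hy1.2⟩
  · left; rfl

/-- Level function used to show the automaton's walk stabilizes. -/
def fval (d : ℤ) : ℕ :=
  if d = 2 ∨ d = 3 then 0
  else if d = 0 ∨ d = 1 then 1
  else if d = -2 ∨ d = -3 then 2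
  else if d = -1 then 3
  else if 4 ≤ d then d.natAbs
  else d.natAbs + 1

/-- "Partner" of a relative displacement: the other displacement with the same
`fval`, if any. -/
def pf (d : ℤ) : ℤ :=
  if d = 0 then 1 else if d = 1 then 0 else if d = 2 then 3 else if d = 3 then 2
  else if d = -2 then -3 else if d = -3 then -2
  else if 4 ≤ d then -(d - 1) else if d ≤ -4 then -d + 1 else d

def ell (P u : V) : ℕ := 2 * fval (u.1 - P.1) + (if u.2 = P.2 then 0 else 1)

lemma fval_step1 {d : ℤ} (h : (0 ≤ d ∧ d ≤ 2) ∨ d ≤ -3) : fval (d + 1) ≤ fval d := by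
  unfold fval; split_ifs <;> omega

lemma fval_step2 {d : ℤ} (h : ¬((0 ≤ d ∧ d ≤ 2) ∨ d ≤ -3)) : fval (d - 1) ≤ fval d := by
  unfold fval; split_ifs <;> omega

set_option maxHeartbeats 2000000 in
lemma fval_fiber {d₁ d₂ : ℤ} (h : fval d₂ = fval d₁) : d₂ = d₁ ∨ d₂ = pf d₁ := by
  unfold fval at h
  unfold pf
  split_ifs at h ⊢ <;> omega

lemma ell_refl (P : V) : ell P P = 2 := by
  norm_num [ell, fval]

lemma ell_P_le {P u : V} (h : P ∈ nbrs u) : ell P P ≤ ell P u := by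
  rw [ell_refl, mem_nbrs] at *
  rcases h with h | h | h
  · have h1 : u.1 - P.1 = 1 := by rw [h]; show u.1 - (u.1 - 1) = 1; omega
    have h2 : u.2 = P.2 := by rw [h]
    rw [ell, h1, h2, if_pos rfl]
    norm_num [fval]
  · have h1 : u.1 - P.1 = -1 := by rw [h]; show u.1 - (u.1 + 1) = -1; omega
    rw [ell, h1]
    have : fval (-1) = 3 := by norm_num [fval]
    rw [this]; omega
  · have h1 : u.1 - P.1 = 0 := by rw [h]; show u.1 - u.1 = 0; omega
    rw [ell, h1]
    have : fval 0 = 1 := by norm_num [fval]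
    rw [this]; omega

lemma ell_etgt (A : Collective 1) (p : Fin 2 → V)
    (hbf : p 0 = p 1 → bfollow A = false) :
    ell (p 1) (etgt A p) ≤ ell (p 1) (p 0) := by
  unfold etgt
  split_ifs with h1 h2 h3
  · rw [hbf h1] at h2; exact absurd h2 (by simp)
  · -- blob, horizontal move
    rw [← h1]
    unfold ell
    have e1 : (p 0).1 + 1 - (p 0).1 = 1 := by omega
    have e2 : (p 0).1 - (p 0).1 = 0 := by omega
    show 2 * fval (((p 0).1 + 1, (p 0).2).1 - (p 0).1) +
        (if ((p 0).1 + 1, (p 0).2).2 = (p 0).2 then 0 else 1) ≤ _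
    simp only [e1, e2]
    have : fval 1 = fval 0 := by norm_num [fval]
    simp [this]
  · -- move right
    unfold ell
    show 2 * fval ((p 0).1 + 1 - (p 1).1) +
        (if (p 0).2 = (p 1).2 then 0 else 1) ≤ _
    have e1 : (p 0).1 + 1 - (p 1).1 = ((p 0).1 - (p 1).1) + 1 := by ring
    rw [e1]
    have := fval_step1 h3
    omega
  · -- move left
    unfold ell
    show 2 * fval ((p 0).1 - 1 - (p 1).1) +
        (if (p 0).2 = (p 1).2 then 0 else 1) ≤ _
    have e1 : (p 0).1 - 1 - (p 1).1 = ((p 0).1 - (p 1).1) - 1 := by ring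
    rw [e1]
    have := fval_step2 h3
    omega

lemma ell_fiber {P u₁ u₂ : V} (h : ell P u₂ = ell P u₁) :
    u₂ = u₁ ∨ u₂ = (pf (u₁.1 - P.1) + P.1, u₁.2) := by
  unfold ell at h
  have hrow : u₂.2 = u₁.2 ∧ fval (u₂.1 - P.1) = fval (u₁.1 - P.1) := by
    split_ifs at h with hA hB hB
    · exact ⟨hA.trans hB.symm, by omega⟩
    · omega
    · omega
    · exact ⟨row_eq_of_ne hA hB, by omega⟩
  obtain ⟨hrow, hfv⟩ := hrow
  rcases fval_fiber hfv with hd | hd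
  · left; exact Prod.ext_iff.mpr ⟨by omega, hrow⟩
  · right; exact Prod.ext_iff.mpr ⟨by omega, hrow⟩

lemma blob_forever (A : Collective 1) (p₀ : Fin 2 → V) (hb : bfollow A = true)
    (t : ℕ) (h : (run A p₀ t).2 0 = (run A p₀ t).2 1) :
    ∀ k, (run A p₀ (t + k)).2 0 = (run A p₀ (t + k)).2 1 ∧
      ((run A p₀ (t + k)).2 0).1 = ((run A p₀ t).2 0).1 := by
  intro k
  induction k with
  | zero => exact ⟨h, rfl⟩
  | succ k ih =>
    obtain ⟨hB, hX⟩ := ih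
    set z := run A p₀ (t + k) with hz
    have hrun : run A p₀ (t + (k + 1)) = nextC A z := rfl
    rw [hrun, nextC_zero, nextC_one]
    rcases nextPos_cases A z.1 z.2 with hnp | hnp | ⟨hnp, hmem⟩
    · rw [hnp, if_neg (by intro hcond; exact hcond.2.2 rfl)]
      exact ⟨hB, hX⟩
    · have hE : etgt A z.2 = ((z.2 0).1, (z.2 0).2 + 1) := by
        unfold etgt; rw [if_pos hB, if_pos hb]
      rw [hE] at hnp
      have hne : nextPos A z.1 z.2 ≠ z.2 0 := by
        rw [hnp]
        intro e
        exact row_ne_succ (z.2 0).2 (congrArg Prod.snd e)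
      have hρ : A.ρ 1 (obs z.2 (z.2 1)) = true := by
        rw [← hB, obs_blob hB]
        exact hb
      rw [if_pos ⟨hρ, hB.symm, hne⟩]
      exact ⟨rfl, by rw [hnp]; exact hX⟩
    · rw [← hB] at hmem
      exact absurd hmem (self_not_mem_nbrs _)

lemma pebble_const (A : Collective 1) (p₀ : Fin 2 → V)
    (hC : ∀ t, ¬((run A p₀ t).2 0 = (run A p₀ t).2 1 ∧ bfollow A = true)) :
    ∀ t, (run A p₀ t).2 1 = p₀ 1 := by
  intro t
  induction t with
  | zero => rfl
  | succ t ih =>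
    rw [run_succ, nextC_one]
    split_ifs with hcond
    · exfalso
      obtain ⟨hρ, hpe, -⟩ := hcond
      have hblob : (run A p₀ t).2 0 = (run A p₀ t).2 1 := hpe.symm
      have hobs : obs (run A p₀ t).2 ((run A p₀ t).2 1) = xT := by
        rw [hpe]; exact obs_blob hblob
      rw [hobs] at hρ
      exact hC t ⟨hblob, hρ⟩
    · exact ih

lemma ell_nonincr (A : Collective 1) (p₀ : Fin 2 → V)
    (hC : ∀ t, ¬((run A p₀ t).2 0 = (run A p₀ t).2 1 ∧ bfollow A = true))
    (hP : ∀ t, (run A p₀ t).2 1 = p₀ 1) (t : ℕ) :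
    ell (p₀ 1) ((run A p₀ (t + 1)).2 0) ≤ ell (p₀ 1) ((run A p₀ t).2 0) := by
  set z := run A p₀ t with hz
  have h1 : (run A p₀ (t + 1)).2 0 = nextPos A z.1 z.2 := by
    rw [run_succ, nextC_zero]
  rw [h1, ← hP t]
  rcases nextPos_cases A z.1 z.2 with hnp | hnp | ⟨hnp, hmem⟩
  · rw [hnp]
  · rw [hnp]
    refine ell_etgt A z.2 (fun hblob => ?_)
    cases hbv : bfollow A with
    | false => rfl
    | true => exact absurd ⟨hblob, hbv⟩ (hC t)
  · rw [hnp]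
    exact ell_P_le hmem


lemma g_antitone (g : ℕ → ℕ) (hmono : ∀ t, g (t + 1) ≤ g t) :
    ∀ a b : ℕ, a ≤ b → g b ≤ g a := by
  intro a b h
  induction h with
  | refl => exact le_rfl
  | step h ih => exact le_trans (hmono _) ih

lemma stab_aux : ∀ n (g : ℕ → ℕ), g 0 ≤ n → (∀ t, g (t + 1) ≤ g t) →
    ∃ N, ∀ t, N ≤ t → g t = g N := by
  intro n
  induction n with
  | zero =>
    intro g h0 hmono
    refine ⟨0, fun t ht => ?_⟩
    have := g_antitone g hmono 0 t (Nat.zero_le _)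
    omega
  | succ n ihn =>
    intro g h0 hmono
    by_cases hall : ∀ t, g t = g 0
    · exact ⟨0, fun t _ => by rw [hall t]⟩
    · push_neg at hall
      obtain ⟨t₀, ht₀⟩ := hall
      have hle : g t₀ ≤ g 0 := g_antitone g hmono 0 t₀ (Nat.zero_le _)
      have hlt : g t₀ < g 0 := lt_of_le_of_ne hle ht₀
      obtain ⟨N, hN⟩ := ihn (fun k => g (t₀ + k)) (by simp; omega)
        (fun k => hmono (t₀ + k))
      refine ⟨t₀ + N, fun t ht => ?_⟩
      have := hN (t - t₀) (by omega)
      rw [show t₀ + (t - t₀) = t from by omega] at this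
      exact this

lemma coord_pair (p : Fin 2 → V) :
    coord p = ((((p 0).1 : ℚ) + ((p 1).1 : ℚ)) / 2,
      ((((p 0).2 : ℕ) : ℚ) + (((p 1).2 : ℕ) : ℚ)) / 2) := by
  unfold coord
  rw [Fin.sum_univ_two, Fin.sum_univ_two]
  norm_num

lemma half_eq {u v : ℚ × ℚ} (h : u + u = v + v) : u = v := by
  obtain ⟨h1, h2⟩ := Prod.ext_iff.mp h
  simp only [Prod.fst_add, Prod.snd_add] at h1 h2
  exact Prod.ext_iff.mpr ⟨by linarith, by linarith⟩

lemma not_directed_of_two_values {A : Collective 1} (c : ℕ → A.Q × (Fin 2 → V))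
    (a b : ℚ × ℚ) (N : ℕ)
    (h : ∀ t, N ≤ t → coord (c t).2 = a ∨ coord (c t).2 = b) :
    ¬ DirectedImpl A c := by
  rintro ⟨c₁, c₂, -, hv⟩
  obtain ⟨t', t'', ht1, ht2, ht3, ht4, heq, hne⟩ := hv N
  set x0 := coord (c N).2 with hx0
  set x1 := coord (c (N + t')).2 with hx1
  set x2 := coord (c (N + t' + t'')).2 with hx2
  have m0 := h N le_rfl
  have m1 := h (N + t') (by omega)
  have m2 := h (N + t' + t'') (by omega)
  have hsum : x1 + x1 = x2 + x0 := by
    rw [sub_eq_sub_iff_add_eq_add] at heq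
    exact heq
  have h01 : x0 ≠ x1 := fun e => hne (by rw [e]; simp; rfl)
  have h12 : x1 ≠ x2 := fun e => hne (by rw [heq, ← e]; simp; rfl)
  have h02 : x0 ≠ x2 := by
    intro e
    have : x1 = x0 := half_eq (by rw [hsum, ← e])
    exact h01 this.symm
  rcases m0 with e0 | e0 <;> rcases m1 with e1 | e1 <;> rcases m2 with e2 | e2 <;>
    first
      | exact h01 (e0.trans e1.symm)
      | exact h12 (e1.trans e2.symm)
      | exact h02 (e0.trans e2.symm)

/-- For every collective of type (1,1) on the square lattice of
width 2 and every initial configuration, the movement of the collective is not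
directed: there exists an implementation of its behaviour that is not directed. -/
theorem not_directed_1_1 (A : Collective 1) (p₀ : Fin 2 → V) :
    ∃ c : ℕ → A.Q × (Fin 2 → V),
      Implementation A p₀ c ∧ ¬ DirectedImpl A c := by
  refine ⟨run A p₀, ⟨rfl, fun t => step_next A _⟩, ?_⟩
  by_cases hb : ∃ t, (run A p₀ t).2 0 = (run A p₀ t).2 1 ∧ bfollow A = true
  · obtain ⟨t₁, hblob, hbf⟩ := hb
    set x : ℤ := ((run A p₀ t₁).2 0).1 with hxdef
    apply not_directed_of_two_values _ ((x : ℚ), 0) ((x : ℚ), 1) t₁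
    intro t ht
    obtain ⟨k, rfl⟩ := Nat.exists_eq_add_of_le ht
    obtain ⟨hB, hX⟩ := blob_forever A p₀ hbf t₁ hblob k
    rw [coord_pair, ← hB]
    set u := (run A p₀ (t₁ + k)).2 0 with hu
    have hXQ : (u.1 : ℚ) = (x : ℚ) := by exact_mod_cast congrArg Int.cast hX
    have hfst : ((u.1 : ℚ) + (u.1 : ℚ)) / 2 = (x : ℚ) := by rw [hXQ]; ring
    rcases (by decide : ∀ r : Fin 2, r = 0 ∨ r = 1) u.2 with hr | hr
    · left
      refine Prod.ext_iff.mpr ⟨hfst, ?_⟩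
      rw [hr]
      norm_num
    · right
      refine Prod.ext_iff.mpr ⟨hfst, ?_⟩
      rw [hr]
      norm_num
  · have hC : ∀ t, ¬((run A p₀ t).2 0 = (run A p₀ t).2 1 ∧ bfollow A = true) :=
      fun t h => hb ⟨t, h⟩
    have hP := pebble_const A p₀ hC
    obtain ⟨N, hN⟩ := stab_aux (ell (p₀ 1) ((run A p₀ 0).2 0))
      (fun t => ell (p₀ 1) ((run A p₀ t).2 0)) le_rfl (ell_nonincr A p₀ hC hP)
    set u := (run A p₀ N).2 0 with hu
    set u' : V := (pf (u.1 - (p₀ 1).1) + (p₀ 1).1, u.2) with hu'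
    apply not_directed_of_two_values _
      (((u.1 : ℚ) + ((p₀ 1).1 : ℚ)) / 2,
        (((u.2 : ℕ) : ℚ) + (((p₀ 1).2 : ℕ) : ℚ)) / 2)
      (((u'.1 : ℚ) + ((p₀ 1).1 : ℚ)) / 2,
        (((u'.2 : ℕ) : ℚ) + (((p₀ 1).2 : ℕ) : ℚ)) / 2) N
    intro t ht
    have hfib := ell_fiber (P := p₀ 1) (u₁ := u) (u₂ := (run A p₀ t).2 0)
      (hN t ht)
    rw [coord_pair, hP t]
    rcases hfib with he | he
    · left; rw [he]
    · right; rw [he]
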